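/- Let T be the balanced rooted tree on n vertices with q levels and branching factors D_1,…,D_q, and define the edge vector t_Δ by setting, for each edge e of T, t_e = (number of vertices in the subtree hanging below e)/n. Then Σ_{e} t_e² ≤ Σ_{l=1}^{q} (Π_{i=1}^{l} D_i)^{−1} + (D_q+2)(D_q+2+2q)/n. -/

import Mathlib

open scoped Classical

lemma aux_exists_interval (f : ℕ → ℕ) : ∀ (k x : ℕ), f 0 ≤ x → x < f (k+1) →
    ∃ m, m ≤ k ∧ f m ≤ x ∧ x < f (m+1) := by
  intro k
  induction k with
  | zero => intro x h1 h2; exact ⟨0, le_refl _, h1, h2⟩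
  | succ k ih =>
    intro x h1 h2
    by_cases h : f (k+1) ≤ x
    · exact ⟨k+1, le_refl _, h, h2⟩
    · obtain ⟨m, hm, h3, h4⟩ := ih x h1 (lt_of_not_ge h)
      exact ⟨m, hm.trans (Nat.le_succ _), h3, h4⟩

private lemma aux_mod_inj (d r : ℕ) {M : ℕ} :
    Set.InjOn (fun i => i / d)
      ↑((Finset.range M).filter (fun i => i % d = r)) := by
  intro i hi j hj hij
  simp only [Finset.coe_filter, Set.mem_setOf_eq, Finset.mem_range] at hi hj
  have h1 : i = d * (i / d) + i % d := (Nat.div_add_mod i d).symm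
  have h2 : j = d * (j / d) + j % d := (Nat.div_add_mod j d).symm
  simp only at hij
  rw [h1, h2, hij, hi.2, hj.2]

lemma aux_card_mod_le (M d r : ℕ) :
    ((Finset.range M).filter (fun i => i % d = r)).card ≤ M / d + 1 := by
  classical
  rw [← Finset.card_range (M / d + 1)]
  apply Finset.card_le_card_of_injOn (fun i => i / d) _ (aux_mod_inj d r)
  intro i hi
  simp only [Finset.mem_coe, Finset.mem_filter, Finset.mem_range] at hi ⊢
  exact lt_of_le_of_lt (Nat.div_le_div_right hi.1.le) (Nat.lt_succ_self _)

lemma aux_card_mod_le_of_dvd (M d r : ℕ) (h : d ∣ M) :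
    ((Finset.range M).filter (fun i => i % d = r)).card ≤ M / d := by
  classical
  rw [← Finset.card_range (M / d)]
  apply Finset.card_le_card_of_injOn (fun i => i / d) _ (aux_mod_inj d r)
  intro i hi
  simp only [Finset.mem_coe, Finset.mem_filter, Finset.mem_range] at hi ⊢
  exact Nat.div_lt_div_of_lt_of_dvd h hi.1

lemma aux_card_mod_le' (M d r : ℕ) :
    ((Finset.range M).filter (fun i => i % d = r)).card ≤
      M / d + (if r < M % d then 1 else 0) := by
  classical
  by_cases hr : r < M % d
  · simpa [hr] using aux_card_mod_le M d r
  · simp only [hr, if_false, Nat.add_zero]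
    rw [← Finset.card_range (M / d)]
    apply Finset.card_le_card_of_injOn (fun i => i / d) _ (aux_mod_inj d r)
    intro i hi
    simp only [Finset.mem_coe, Finset.mem_filter, Finset.mem_range] at hi ⊢
    obtain ⟨h1, h2⟩ := hi
    have hd : 0 < d := by
      rcases Nat.eq_zero_or_pos d with h | h
      · subst h; simp at h2; omega
      · exact h
    have e1 := Nat.div_add_mod i d
    have e2 := Nat.div_add_mod M d
    by_contra hcon
    push_neg at hcon
    have : d * (M / d) ≤ d * (i / d) := Nat.mul_le_mul_left d hcon
    omega

lemma aux_card_filter_shift (a b : ℕ) (p : ℕ → Prop) [DecidablePred p] :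
    ((Finset.Ico a b).filter (fun x => p (x - a))).card
      = ((Finset.range (b - a)).filter p).card := by
  classical
  apply Finset.card_bij (fun x _ => x - a)
  · intro x hx
    simp only [Finset.mem_filter, Finset.mem_Ico] at hx
    simp only [Finset.mem_filter, Finset.mem_range]
    exact ⟨by omega, hx.2⟩
  · intro x hx y hy h
    simp only [Finset.mem_filter, Finset.mem_Ico] at hx hy
    omega
  · intro y hy
    simp only [Finset.mem_filter, Finset.mem_range] at hy
    refine ⟨a + y, ?_, by omega⟩
    simp only [Finset.mem_filter, Finset.mem_Ico]
    refine ⟨⟨by omega, by omega⟩, ?_⟩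
    simpa using hy.2

lemma aux_div_add_div (a b d : ℕ) : a / d + b / d ≤ (a + b) / d := by
  rcases Nat.eq_zero_or_pos d with h | h
  · simp [h]
  · rw [Nat.le_div_iff_mul_le h, Nat.add_mul]
    exact Nat.add_le_add (Nat.div_mul_le_self a d) (Nat.div_mul_le_self b d)

lemma aux_div_mul_le (a b d : ℕ) : a / d * b ≤ a * b / d := by
  rcases Nat.eq_zero_or_pos d with h | h
  · simp [h]
  · rw [Nat.le_div_iff_mul_le h]
    calc a / d * b * d = a / d * d * b := by ring
    _ ≤ a * b := Nat.mul_le_mul_right b (Nat.div_mul_le_self a d)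

lemma aux_sum_div_le {α : Type*} (s : Finset α) (a : α → ℕ) (d : ℕ) :
    (∑ m ∈ s, a m / d) ≤ (∑ m ∈ s, a m) / d := by
  classical
  induction s using Finset.induction with
  | empty => simp
  | insert _ _ h ih =>
    rw [Finset.sum_insert h, Finset.sum_insert h]
    exact le_trans (Nat.add_le_add_left ih _) (aux_div_add_div _ _ _)

theorem stmt_17 (n q : ℕ) (D : ℕ → ℕ) (hn : 0 < n)
    (hq : 3 ≤ q) (hDpos : ∀ l, 1 ≤ l → l ≤ q → 1 ≤ D l)
    -- size condition relating n to the branching factors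
    (hsize1 : (∑ i ∈ Finset.Icc 1 q, ∏ j ∈ Finset.Icc 1 i, D j) -
        (D q + 1) * ∏ j ∈ Finset.Icc 1 (q - 2), D j < n)
    (hsize2 : n ≤ ∑ i ∈ Finset.Icc 1 q, ∏ j ∈ Finset.Icc 1 i, D j)
    -- the tree structure: level sizes and parent map
    (z ZZ : ℕ → ℕ) (hz0 : z 0 = 1) (hZZ0 : ZZ 0 = 0)
    (hZZs : ∀ l, ZZ (l + 1) = ZZ l + z l)
    (hzrec : ∀ l, 1 ≤ l → l ≤ q - 2 → z l = z (l - 1) * D l)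
    (hzq1 : z (q - 1) = (n - ZZ (q - 1) + D q) / (D q + 1))
    (hzq : z q = n - ZZ q) (htot : ZZ (q + 1) = n)
    (par : ℕ → ℕ) (hpar0 : par 0 = 0)
    (hpar : ∀ l, 1 ≤ l → l ≤ q → ∀ c, ZZ l ≤ c → c < ZZ (l + 1) →
      par c = ZZ (l - 1) + (c - ZZ l) % z (l - 1))
    -- subtree sizes
    (sub : ℕ → ℕ)
    (hsub : ∀ c, sub c =
      ((Finset.range n).filter fun x => ∃ j : ℕ, par^[j] x = c).card) :
    ∑ c ∈ Finset.Ico 1 n, ((sub c : ℝ) / (n : ℝ)) ^ 2 ≤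
      ∑ l ∈ Finset.Icc 1 q, (∏ i ∈ Finset.Icc 1 l, (D i : ℝ))⁻¹ +
        ((D q : ℝ) + 2) * ((D q : ℝ) + 2 + 2 * (q : ℝ)) / (n : ℝ) := by
  classical
  set P : ℕ → ℕ := fun l => ∏ i ∈ Finset.Icc 1 l, D i with hP
  have hPpos : ∀ l, l ≤ q → 1 ≤ P l := by
    intro l hl
    apply Finset.one_le_prod'
    intro i hi
    rw [Finset.mem_Icc] at hi
    exact hDpos i hi.1 (hi.2.trans hl)
  have hPdvd : ∀ a b, a ≤ b → P a ∣ P b := by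
    intro a b h
    exact Finset.prod_dvd_prod_of_subset _ _ _ (Finset.Icc_subset_Icc_right h)
  have hzP : ∀ l, l ≤ q - 2 → z l = P l := by
    intro l
    induction l with
    | zero => intro _; simp [hP, hz0]
    | succ l ih =>
      intro hl
      have h1 : z (l+1) = z l * D (l+1) := by
        have := hzrec (l+1) (by omega) hl
        simpa using this
      rw [h1, ih (by omega)]
      show (∏ i ∈ Finset.Icc 1 l, D i) * D (l + 1) = ∏ i ∈ Finset.Icc 1 (l + 1), D i
      exact (Finset.prod_Icc_succ_top (by omega : 1 ≤ l + 1) D).symm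
  have hZZmono : ∀ b a, a ≤ b → ZZ a ≤ ZZ b := by
    intro b
    induction b with
    | zero => intro a h; have : a = 0 := by omega
              subst this; exact le_refl _
    | succ b ih =>
      intro a h
      rcases Nat.eq_or_lt_of_le h with h' | h'
      · subst h'; exact le_refl _
      · exact (ih a (by omega)).trans (by rw [hZZs b]; omega)
  have hZZ1 : ZZ 1 = 1 := by rw [hZZs 0, hZZ0, hz0]
  have hZZn : ∀ l, l ≤ q + 1 → ZZ l ≤ n := by
    intro l hl; rw [← htot]; exact hZZmono _ _ hl
  have hnsplit : n = ZZ (q-1) + z (q-1) + z q := by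
    have h1 : ZZ (q+1) = ZZ q + z q := hZZs q
    have h2 : ZZ q = ZZ (q-1) + z (q-1) := by
      have := hZZs (q-1)
      have e : q - 1 + 1 = q := by omega
      rw [e] at this
      exact this
    omega
  have hzqle : z q ≤ D q * z (q - 1) := by
    have hmod := Nat.div_add_mod (n - ZZ (q-1) + D q) (D q + 1)
    rw [← hzq1] at hmod
    have hm2 : (n - ZZ (q-1) + D q) % (D q + 1) < D q + 1 :=
      Nat.mod_lt _ (by omega)
    have e : (D q + 1) * z (q-1) = D q * z (q-1) + z (q-1) := by ring
    rw [e] at hmod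
    have hZZq1 : ZZ (q-1) ≤ n := hZZn _ (by omega)
    omega
  have hzq1pos : 0 < z q → 0 < z (q-1) := by
    intro h
    rcases Nat.eq_zero_or_pos (z (q-1)) with h' | h'
    · rw [h'] at hzqle; omega
    · exact h'
  have hzpos : ∀ l, l ≤ q - 2 → 0 < z l := by
    intro l hl; rw [hzP l hl]; exact hPpos l (by omega)
  -- parent map sends level m into level m-1
  have hparmap : ∀ m, 1 ≤ m → m ≤ q → ∀ x, ZZ m ≤ x → x < ZZ (m+1) →
      par x = ZZ (m-1) + (x - ZZ m) % z (m-1) ∧ ZZ (m-1) ≤ par x ∧ par x < ZZ m := by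
    intro m h1 h2 x hx1 hx2
    have hzm : 0 < z (m-1) := by
      rcases Nat.lt_or_ge m q with h | h
      · exact hzpos (m-1) (by omega)
      · have hmq : m = q := by omega
        rw [hmq] at hx1 hx2 ⊢
        apply hzq1pos
        have := hZZs q
        omega
    have hf := hpar m h1 h2 x hx1 hx2
    have hmod : (x - ZZ m) % z (m-1) < z (m-1) := Nat.mod_lt _ hzm
    have hZZm : ZZ m = ZZ (m-1) + z (m-1) := by
      have := hZZs (m-1)
      have e : m - 1 + 1 = m := by omega
      rw [e] at this; exact this
    exact ⟨hf, by omega, by omega⟩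
  have hiterlevel : ∀ j m x, j ≤ m → m ≤ q → ZZ m ≤ x → x < ZZ (m+1) →
      ZZ (m-j) ≤ par^[j] x ∧ par^[j] x < ZZ (m-j+1) := by
    intro j
    induction j with
    | zero => intro m x _ _ h3 h4; simpa using ⟨h3, h4⟩
    | succ j ih =>
      intro m x hj hm h3 h4
      have h1m : 1 ≤ m := by omega
      obtain ⟨_, hp1, hp2⟩ := hparmap m h1m hm x h3 h4
      have e : m - 1 + 1 = m := by omega
      rw [Function.iterate_succ_apply]
      have := ih (m-1) (par x) (by omega) (by omega) hp1 (by rw [e]; exact hp2)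
      have e2 : m - 1 - j = m - (j+1) := by omega
      rw [e2] at this
      exact this
  have hroot : ∀ j, par^[j] (0:ℕ) = 0 := by
    intro j; induction j with
    | zero => rfl
    | succ j ih => rw [Function.iterate_succ_apply, hpar0, ih]
  have hsub_iff : ∀ l, 1 ≤ l → l ≤ q → ∀ c, ZZ l ≤ c → c < ZZ (l+1) →
      ∀ m, m ≤ q → ∀ x, ZZ m ≤ x → x < ZZ (m+1) →
      ((∃ j, par^[j] x = c) ↔ (l ≤ m ∧ par^[m-l] x = c)) := by
    intro l hl1 hl2 c hc1 hc2 m hm x hx1 hx2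
    constructor
    · rintro ⟨j, hj⟩
      rcases le_or_gt j m with hjm | hjm
      · have hlev := hiterlevel j m x hjm hm hx1 hx2
        rw [hj] at hlev
        have hlm : m - j = l := by
          by_contra hne
          rcases Nat.lt_or_ge (m-j) l with h | h
          · have := hZZmono l (m-j+1) (by omega)
            omega
          · have := hZZmono (m-j) (l+1) (by omega)
            omega
        refine ⟨by omega, ?_⟩
        have : j = m - l := by omega
        rw [← this]; exact hj
      · exfalso
        have h0 : par^[m] x = 0 := by
          have := hiterlevel m m x (le_refl m) hm hx1 hx2
          simp only [Nat.sub_self, Nat.zero_add] at this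
          rw [hZZ0, hZZ1] at this
          omega
        have hj0 : par^[j] x = 0 := by
          have e : j = (j - m) + m := by omega
          rw [e, Function.iterate_add_apply, h0, hroot]
        rw [hj] at hj0
        have := hZZmono l 1 hl1
        rw [hZZ1] at this
        omega
    · rintro ⟨h1, h2⟩; exact ⟨m - l, h2⟩
  have hchain : ∀ k l, 1 ≤ l → l + k ≤ q - 1 → ∀ x, ZZ (l+k) ≤ x → x < ZZ (l+k+1) →
      par^[k] x = ZZ l + (x - ZZ (l+k)) % z l := by
    intro k
    induction k with
    | zero =>
      intro l hl1 hl2 x hx1 hx2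
      simp only [Nat.add_zero] at hx1 hx2 ⊢
      have hZZl : ZZ (l+1) = ZZ l + z l := hZZs l
      rw [Function.iterate_zero_apply, Nat.mod_eq_of_lt (by omega)]
      omega
    | succ k ih =>
      intro l hl1 hl2 x hx1 hx2
      have h1m : 1 ≤ l + (k+1) := by omega
      have hmq : l + (k+1) ≤ q := by omega
      obtain ⟨hf, hp1, hp2⟩ := hparmap (l+(k+1)) h1m hmq x hx1 hx2
      have e : l + (k+1) - 1 = l + k := by omega
      rw [e] at hf
      rw [e] at hp1
      rw [Function.iterate_succ_apply]
      have hih := ih l hl1 (by omega) (par x) hp1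
        (by
          have e2 : l + k + 1 = l + (k + 1) := by omega
          rw [e2]; exact hp2)
      rw [hih]
      have hsubx : par x - ZZ (l+k) = (x - ZZ (l+(k+1))) % z (l+k) := by omega
      rw [hsubx]
      have hdvd : z l ∣ z (l+k) := by
        rw [hzP l (by omega), hzP (l+k) (by omega)]
        exact hPdvd l (l+k) (by omega)
      rw [Nat.mod_mod_of_dvd _ hdvd]
  -- decomposition of range n into levels
  have hrange : Finset.range n
      = (Finset.Icc 0 q).biUnion (fun m => Finset.Ico (ZZ m) (ZZ (m+1))) := by
    ext x
    simp only [Finset.mem_range, Finset.mem_biUnion, Finset.mem_Icc, Finset.mem_Ico]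
    constructor
    · intro hx
      obtain ⟨m, hm, h1, h2⟩ := aux_exists_interval ZZ q x (by rw [hZZ0]; omega)
        (by rw [htot]; omega)
      exact ⟨m, ⟨Nat.zero_le _, hm⟩, h1, h2⟩
    · rintro ⟨m, ⟨_, hm⟩, h1, h2⟩
      have := hZZmono (q+1) (m+1) (by omega)
      omega
  have hIcodisj : ∀ a b : ℕ, a ≠ b →
      Disjoint (Finset.Ico (ZZ a) (ZZ (a+1))) (Finset.Ico (ZZ b) (ZZ (b+1))) := by
    intro a b hab
    rw [Finset.disjoint_left]
    intro x hx1 hx2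
    rw [Finset.mem_Ico] at hx1 hx2
    rcases Nat.lt_or_ge a b with h | h
    · have := hZZmono b (a+1) (by omega)
      omega
    · have := hZZmono a (b+1) (by omega)
      omega
  have hdecomp : ∀ c, sub c = ∑ m ∈ Finset.Icc 0 q,
      ((Finset.Ico (ZZ m) (ZZ (m+1))).filter (fun x => ∃ j, par^[j] x = c)).card := by
    intro c
    rw [hsub c, hrange, Finset.filter_biUnion]
    exact Finset.card_biUnion
      (fun a _ b _ hab => Finset.disjoint_filter_filter (hIcodisj a b hab))
  have hNzero : ∀ l, 1 ≤ l → l ≤ q → ∀ c, ZZ l ≤ c → c < ZZ (l+1) → ∀ m, m ≤ q → m < l →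
      ((Finset.Ico (ZZ m) (ZZ (m+1))).filter (fun x => ∃ j, par^[j] x = c)).card = 0 := by
    intro l hl1 hl2 c hc1 hc2 m hm1 hm2
    rw [Finset.card_eq_zero, Finset.filter_eq_empty_iff]
    intro x hx
    rw [Finset.mem_Ico] at hx
    rw [hsub_iff l hl1 hl2 c hc1 hc2 m hm1 x hx.1 hx.2]
    rintro ⟨h, -⟩
    omega
  have hNself : ∀ l, 1 ≤ l → l ≤ q → ∀ c, ZZ l ≤ c → c < ZZ (l+1) →
      ((Finset.Ico (ZZ l) (ZZ (l+1))).filter (fun x => ∃ j, par^[j] x = c)).card ≤ 1 := by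
    intro l hl1 hl2 c hc1 hc2
    have hss : (Finset.Ico (ZZ l) (ZZ (l+1))).filter (fun x => ∃ j, par^[j] x = c)
        ⊆ {c} := by
      intro x hx
      rw [Finset.mem_filter, Finset.mem_Ico] at hx
      obtain ⟨⟨h1, h2⟩, hex⟩ := hx
      rw [hsub_iff l hl1 hl2 c hc1 hc2 l hl2 x h1 h2] at hex
      obtain ⟨-, h⟩ := hex
      rw [Nat.sub_self] at h
      rw [Finset.mem_singleton]
      simpa using h
    calc ((Finset.Ico (ZZ l) (ZZ (l+1))).filter (fun x => ∃ j, par^[j] x = c)).card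
        ≤ ({c} : Finset ℕ).card := Finset.card_le_card hss
      _ = 1 := Finset.card_singleton c
  have hNchar : ∀ l, 1 ≤ l → ∀ c, ZZ l ≤ c → c < ZZ (l+1) → ∀ m, l ≤ m → m ≤ q - 1 →
      ((Finset.Ico (ZZ m) (ZZ (m+1))).filter (fun x => ∃ j, par^[j] x = c)).card
        = ((Finset.range (z m)).filter (fun i => i % z l = c - ZZ l)).card := by
    intro l hl c hc1 hc2 m hm1 hm2
    have e : l + (m - l) = m := by omega
    have step1 : ∀ x ∈ Finset.Ico (ZZ m) (ZZ (m+1)),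
        ((∃ j, par^[j] x = c) ↔ ((x - ZZ m) % z l = c - ZZ l)) := by
      intro x hx
      rw [Finset.mem_Ico] at hx
      rw [hsub_iff l hl (by omega) c hc1 hc2 m (by omega) x hx.1 hx.2]
      have hch := hchain (m - l) l hl (by omega) x (by rw [e]; exact hx.1)
        (by rw [e]; exact hx.2)
      rw [e] at hch
      rw [hch]
      constructor
      · rintro ⟨-, h⟩; omega
      · intro h; exact ⟨hm1, by omega⟩
    rw [Finset.filter_congr step1]
    have e2 : ZZ (m+1) - ZZ m = z m := by rw [hZZs m]; omega
    rw [aux_card_filter_shift (ZZ m) (ZZ (m+1)) (fun i => i % z l = c - ZZ l), e2]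
  have hNqchar : ∀ l, 1 ≤ l → l ≤ q - 1 → ∀ c, ZZ l ≤ c → c < ZZ (l+1) →
      ((Finset.Ico (ZZ q) (ZZ (q+1))).filter (fun x => ∃ j, par^[j] x = c)).card
        = ((Finset.range (z q)).filter
            (fun i => (i % z (q-1)) % z l = c - ZZ l)).card := by
    intro l hl1 hl2 c hc1 hc2
    have e : l + (q - 1 - l) = q - 1 := by omega
    have e4 : q - 1 + 1 = q := by omega
    have step1 : ∀ x ∈ Finset.Ico (ZZ q) (ZZ (q+1)),
        ((∃ j, par^[j] x = c) ↔ (((x - ZZ q) % z (q-1)) % z l = c - ZZ l)) := by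
      intro x hx
      rw [Finset.mem_Ico] at hx
      rw [hsub_iff l hl1 (by omega) c hc1 hc2 q (le_refl q) x hx.1 hx.2]
      obtain ⟨hf, hp1, hp2⟩ := hparmap q (by omega) (le_refl q) x hx.1 hx.2
      have e3 : q - l = (q - 1 - l) + 1 := by omega
      rw [e3, Function.iterate_succ_apply]
      have hch := hchain (q - 1 - l) l hl1 (by omega) (par x)
        (by rw [e]; exact hp1) (by rw [e, e4]; exact hp2)
      rw [e] at hch
      rw [hch, hf]
      have e5 : ZZ (q-1) + (x - ZZ q) % z (q-1) - ZZ (q-1) = (x - ZZ q) % z (q-1) := by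
        omega
      rw [e5]
      constructor
      · rintro ⟨-, h⟩; omega
      · intro h; exact ⟨by omega, by omega⟩
    rw [Finset.filter_congr step1]
    have e2 : ZZ (q+1) - ZZ q = z q := by rw [hZZs q]; omega
    rw [aux_card_filter_shift (ZZ q) (ZZ (q+1))
      (fun i => (i % z (q-1)) % z l = c - ZZ l), e2]
  have hQle : z q / z (q-1) ≤ D q := by
    rcases Nat.eq_zero_or_pos (z (q-1)) with h | h
    · have : z q = 0 := by rw [h] at hzqle; omega
      rw [this]; simp
    · calc z q / z (q-1) ≤ D q * z (q-1) / z (q-1) := Nat.div_le_div_right hzqle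
        _ = D q := Nat.mul_div_cancel (D q) h
  have hZZsum : ∀ k, ZZ k = ∑ m ∈ Finset.range k, z m := by
    intro k
    induction k with
    | zero => simpa using hZZ0
    | succ k ih => rw [hZZs k, Finset.sum_range_succ, ih]
  have hsplitIcc : Finset.Icc 0 q = insert (q-1) (insert q (Finset.Icc 0 (q-2))) := by
    ext a
    simp only [Finset.mem_Icc, Finset.mem_insert]
    omega
  have hsumZZ : ∑ m ∈ Finset.Icc 0 (q-2), z m = ZZ (q-1) := by
    rw [hZZsum (q-1)]
    apply Finset.sum_congr _ (fun _ _ => rfl)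
    ext a
    simp only [Finset.mem_Icc, Finset.mem_range]
    omega
  -- the main bound for levels 1 ≤ l ≤ q-2
  have hsubN : ∀ l, 1 ≤ l → l ≤ q - 2 → ∀ c, ZZ l ≤ c → c < ZZ (l+1) →
      sub c ≤ n / z l + (D q + 2) := by
    intro l hl1 hl2 c hc1 hc2
    have hzl : 0 < z l := hzpos l hl2
    rw [hdecomp c, hsplitIcc]
    rw [Finset.sum_insert (by simp only [Finset.mem_insert, Finset.mem_Icc]; omega)]
    rw [Finset.sum_insert (by simp only [Finset.mem_Icc]; omega)]
    -- bound for the low levels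
    have hb1 : ∑ m ∈ Finset.Icc 0 (q-2),
        ((Finset.Ico (ZZ m) (ZZ (m+1))).filter (fun x => ∃ j, par^[j] x = c)).card
        ≤ ZZ (q-1) / z l := by
      calc ∑ m ∈ Finset.Icc 0 (q-2),
          ((Finset.Ico (ZZ m) (ZZ (m+1))).filter (fun x => ∃ j, par^[j] x = c)).card
          ≤ ∑ m ∈ Finset.Icc 0 (q-2), z m / z l := by
            apply Finset.sum_le_sum
            intro m hm
            rw [Finset.mem_Icc] at hm
            rcases Nat.lt_or_ge m l with h | h
            · rw [hNzero l hl1 (by omega) c hc1 hc2 m (by omega) h]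
              exact Nat.zero_le _
            · rw [hNchar l hl1 c hc1 hc2 m h (by omega)]
              apply aux_card_mod_le_of_dvd
              rw [hzP l (by omega), hzP m (by omega)]
              exact hPdvd l m h
        _ ≤ (∑ m ∈ Finset.Icc 0 (q-2), z m) / z l := aux_sum_div_le _ _ _
        _ = ZZ (q-1) / z l := by rw [hsumZZ]
    have hb2 : ((Finset.Ico (ZZ (q-1)) (ZZ (q-1+1))).filter
        (fun x => ∃ j, par^[j] x = c)).card ≤ z (q-1) / z l + 1 := by
      rw [hNchar l hl1 c hc1 hc2 (q-1) (by omega) (le_refl _)]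
      exact aux_card_mod_le _ _ _
    have hb3 : ((Finset.Ico (ZZ q) (ZZ (q+1))).filter
        (fun x => ∃ j, par^[j] x = c)).card ≤ z q / z l + (D q + 1) := by
      rw [hNqchar l hl1 (by omega) c hc1 hc2]
      rcases Nat.eq_zero_or_pos (z q) with hzq0 | hzq0
      · rw [hzq0]
        simp
      · have hd : 0 < z (q-1) := hzq1pos hzq0
        set d := z (q-1) with hd'
        set S := (Finset.range (z q)).filter
          (fun i => (i % d) % z l = c - ZZ l) with hS
        set Tset := (Finset.range d).filter (fun t => t % z l = c - ZZ l) with hT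
        have hfib : S.card = ∑ t ∈ Tset, (S.filter (fun i => i % d = t)).card := by
          apply Finset.card_eq_sum_card_fiberwise
          intro i hi
          simp only [Finset.mem_coe, hS, Finset.mem_filter, Finset.mem_range] at hi
          simp only [Finset.mem_coe, hT, Finset.mem_filter, Finset.mem_range]
          exact ⟨Nat.mod_lt _ hd, hi.2⟩
        have hper : ∀ t ∈ Tset, (S.filter (fun i => i % d = t)).card
            ≤ z q / d + (if t < z q % d then 1 else 0) := by
          intro t _
          calc (S.filter (fun i => i % d = t)).card
              ≤ ((Finset.range (z q)).filter (fun i => i % d = t)).card := by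
                apply Finset.card_le_card
                intro i hi
                rw [hS] at hi
                simp only [Finset.mem_filter, Finset.mem_range] at hi ⊢
                exact ⟨hi.1.1, hi.2⟩
            _ ≤ _ := aux_card_mod_le' (z q) d t
        have hcard1 : Tset.card ≤ d / z l + 1 := aux_card_mod_le d (z l) _
        have hcard2 : (Tset.filter (fun t => t < z q % d)).card
            ≤ (z q % d) / z l + 1 := by
          calc (Tset.filter (fun t => t < z q % d)).card
              ≤ ((Finset.range (z q % d)).filter
                  (fun i => i % z l = c - ZZ l)).card := by
                apply Finset.card_le_card
                intro t ht
                rw [hT] at ht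
                simp only [Finset.mem_filter, Finset.mem_range] at ht ⊢
                exact ⟨ht.2, ht.1.2⟩
            _ ≤ _ := aux_card_mod_le _ _ _
        have hsumite : ∑ t ∈ Tset, (z q / d + (if t < z q % d then 1 else 0))
            = Tset.card * (z q / d) + (Tset.filter (fun t => t < z q % d)).card := by
          rw [Finset.sum_add_distrib, Finset.sum_const, smul_eq_mul]
          congr 1
          calc ∑ t ∈ Tset, (if t < z q % d then 1 else 0)
              = ∑ t ∈ Tset.filter (fun t => t < z q % d), 1 :=
                (Finset.sum_filter _ _).symm
            _ = (Tset.filter (fun t => t < z q % d)).card := by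
                rw [Finset.card_eq_sum_ones]
        have harith : (d / z l + 1) * (z q / d) + ((z q % d) / z l + 1)
            ≤ z q / z l + (D q + 1) := by
          have h1 : d / z l * (z q / d) ≤ d * (z q / d) / z l := aux_div_mul_le _ _ _
          have h2 : d * (z q / d) / z l + (z q % d) / z l
              ≤ (d * (z q / d) + z q % d) / z l := aux_div_add_div _ _ _
          have h3 : d * (z q / d) + z q % d = z q := Nat.div_add_mod _ _
          calc (d / z l + 1) * (z q / d) + ((z q % d) / z l + 1)
              = (d / z l * (z q / d) + (z q % d) / z l) + (z q / d + 1) := by ring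
            _ ≤ (d * (z q / d) / z l + (z q % d) / z l) + (D q + 1) :=
                Nat.add_le_add (Nat.add_le_add_right h1 _) (Nat.add_le_add_right hQle 1)
            _ ≤ (d * (z q / d) + z q % d) / z l + (D q + 1) := Nat.add_le_add_right h2 _
            _ = z q / z l + (D q + 1) := by rw [h3]
        calc S.card = ∑ t ∈ Tset, (S.filter (fun i => i % d = t)).card := hfib
          _ ≤ ∑ t ∈ Tset, (z q / d + (if t < z q % d then 1 else 0)) :=
              Finset.sum_le_sum hper
          _ = Tset.card * (z q / d) + (Tset.filter (fun t => t < z q % d)).card :=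
              hsumite
          _ ≤ (d / z l + 1) * (z q / d) + ((z q % d) / z l + 1) :=
              Nat.add_le_add (Nat.mul_le_mul_right _ hcard1) hcard2
          _ ≤ z q / z l + (D q + 1) := harith
    have hdiv3 : z (q-1) / z l + (z q / z l + ZZ (q-1) / z l) ≤ n / z l := by
      calc z (q-1) / z l + (z q / z l + ZZ (q-1) / z l)
          ≤ z (q-1) / z l + (z q + ZZ (q-1)) / z l :=
            Nat.add_le_add_left (aux_div_add_div _ _ _) _
        _ ≤ (z (q-1) + (z q + ZZ (q-1))) / z l := aux_div_add_div _ _ _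
        _ = n / z l := by congr 1; omega
    omega
  -- bound for level q-1
  have hsubQ1 : ∀ c, ZZ (q-1) ≤ c → c < ZZ (q-1+1) → sub c ≤ D q + 2 := by
    intro c hc1 hc2
    rw [hdecomp c, hsplitIcc]
    rw [Finset.sum_insert (by simp only [Finset.mem_insert, Finset.mem_Icc]; omega)]
    rw [Finset.sum_insert (by simp only [Finset.mem_Icc]; omega)]
    have hb1 : ∑ m ∈ Finset.Icc 0 (q-2),
        ((Finset.Ico (ZZ m) (ZZ (m+1))).filter (fun x => ∃ j, par^[j] x = c)).card
        = 0 := by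
      apply Finset.sum_eq_zero
      intro m hm
      rw [Finset.mem_Icc] at hm
      exact hNzero (q-1) (by omega) (by omega) c hc1 hc2 m (by omega) (by omega)
    have hb2 : ((Finset.Ico (ZZ (q-1)) (ZZ (q-1+1))).filter
        (fun x => ∃ j, par^[j] x = c)).card ≤ 1 :=
      hNself (q-1) (by omega) (by omega) c hc1 hc2
    have hb3 : ((Finset.Ico (ZZ q) (ZZ (q+1))).filter
        (fun x => ∃ j, par^[j] x = c)).card ≤ D q + 1 := by
      rw [hNqchar (q-1) (by omega) (le_refl _) c hc1 hc2]
      have hcong : ∀ i ∈ Finset.range (z q),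
          ((i % z (q-1)) % z (q-1) = c - ZZ (q-1)) ↔ (i % z (q-1) = c - ZZ (q-1)) := by
        intro i _
        rw [Nat.mod_mod_of_dvd _ dvd_rfl]
      rw [Finset.filter_congr hcong]
      calc ((Finset.range (z q)).filter (fun i => i % z (q-1) = c - ZZ (q-1))).card
          ≤ z q / z (q-1) + 1 := aux_card_mod_le _ _ _
        _ ≤ D q + 1 := Nat.add_le_add_right hQle 1
    omega
  -- bound for level q
  have hsubQbd : ∀ c, ZZ q ≤ c → c < ZZ (q+1) → sub c ≤ 1 := by
    intro c hc1 hc2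
    rw [hsub c]
    have hss : (Finset.range n).filter (fun x => ∃ j, par^[j] x = c) ⊆ {c} := by
      intro x hx
      rw [Finset.mem_filter, Finset.mem_range] at hx
      obtain ⟨hxn, hex⟩ := hx
      obtain ⟨m, hm, h1, h2⟩ := aux_exists_interval ZZ q x (by rw [hZZ0]; omega)
        (by rw [htot]; omega)
      rw [hsub_iff q (by omega) (le_refl q) c hc1 hc2 m hm x h1 h2] at hex
      obtain ⟨hqm, h⟩ := hex
      have hmq : m = q := by omega
      subst hmq
      rw [Nat.sub_self] at h
      rw [Finset.mem_singleton]
      simpa using h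
    calc ((Finset.range n).filter (fun x => ∃ j, par^[j] x = c)).card
        ≤ ({c} : Finset ℕ).card := Finset.card_le_card hss
      _ = 1 := Finset.card_singleton c
  have hn' : (0:ℝ) < (n:ℝ) := by exact_mod_cast hn
  have hsubR : ∀ l, 1 ≤ l → l ≤ q → ∀ c, ZZ l ≤ c → c < ZZ (l+1) →
      (sub c : ℝ) ≤ (n : ℝ) / (P l : ℝ) + ((D q : ℝ) + 2) := by
    intro l hl1 hl2 c hc1 hc2
    have hPl : (0:ℝ) < (P l : ℝ) := by exact_mod_cast hPpos l hl2
    have hnP : (0:ℝ) ≤ (n:ℝ)/(P l : ℝ) := by positivity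
    by_cases hA : l ≤ q - 2
    · have hb := hsubN l hl1 hA c hc1 hc2
      have hzPl : z l = P l := hzP l hA
      have hcast : ((n / z l : ℕ) : ℝ) ≤ (n:ℝ) / ((z l : ℕ) : ℝ) := Nat.cast_div_le
      calc (sub c : ℝ) ≤ ((n / z l + (D q + 2) : ℕ) : ℝ) := by exact_mod_cast hb
        _ = ((n / z l : ℕ) : ℝ) + ((D q : ℝ) + 2) := by push_cast; ring
        _ ≤ (n:ℝ)/((z l : ℕ):ℝ) + ((D q : ℝ) + 2) := by linarith
        _ = (n:ℝ)/(P l:ℝ) + ((D q : ℝ) + 2) := by rw [hzPl]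
    · have hb : sub c ≤ D q + 2 := by
        rcases Nat.lt_or_ge l q with h | h
        · have hlq : l = q - 1 := by omega
          subst hlq
          exact hsubQ1 c hc1 hc2
        · have hlq : l = q := by omega
          subst hlq
          have := hsubQbd c hc1 hc2
          omega
      calc (sub c : ℝ) ≤ ((D q : ℝ) + 2) := by exact_mod_cast hb
        _ ≤ (n:ℝ)/(P l:ℝ) + ((D q : ℝ) + 2) := by linarith
  have hsumsub : ∀ l, 1 ≤ l → l ≤ q →
      (∑ c ∈ Finset.Ico (ZZ l) (ZZ (l+1)), sub c) ≤ n := by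
    intro l hl1 hl2
    have hdisj : ∀ c1 ∈ Finset.Ico (ZZ l) (ZZ (l+1)),
        ∀ c2 ∈ Finset.Ico (ZZ l) (ZZ (l+1)), c1 ≠ c2 →
        Disjoint ((Finset.range n).filter (fun x => ∃ j, par^[j] x = c1))
                 ((Finset.range n).filter (fun x => ∃ j, par^[j] x = c2)) := by
      intro c1 h1 c2 h2 hne
      rw [Finset.mem_Ico] at h1 h2
      rw [Finset.disjoint_left]
      intro x hx1 hx2
      rw [Finset.mem_filter, Finset.mem_range] at hx1 hx2
      obtain ⟨hxn, he1⟩ := hx1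
      obtain ⟨-, he2⟩ := hx2
      obtain ⟨m, hm, ha, hb⟩ := aux_exists_interval ZZ q x (by rw [hZZ0]; omega)
        (by rw [htot]; omega)
      rw [hsub_iff l hl1 hl2 c1 h1.1 h1.2 m hm x ha hb] at he1
      rw [hsub_iff l hl1 hl2 c2 h2.1 h2.2 m hm x ha hb] at he2
      exact hne (he1.2.symm.trans he2.2)
    calc ∑ c ∈ Finset.Ico (ZZ l) (ZZ (l+1)), sub c
        = ∑ c ∈ Finset.Ico (ZZ l) (ZZ (l+1)),
            ((Finset.range n).filter (fun x => ∃ j, par^[j] x = c)).card :=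
          Finset.sum_congr rfl (fun c _ => hsub c)
      _ = ((Finset.Ico (ZZ l) (ZZ (l+1))).biUnion
            (fun c => (Finset.range n).filter (fun x => ∃ j, par^[j] x = c))).card :=
          (Finset.card_biUnion hdisj).symm
      _ ≤ (Finset.range n).card := Finset.card_le_card
            (Finset.biUnion_subset.mpr (fun c _ => Finset.filter_subset _ _))
      _ = n := Finset.card_range n
  have hIco1n : Finset.Ico 1 n
      = (Finset.Icc 1 q).biUnion (fun l => Finset.Ico (ZZ l) (ZZ (l+1))) := by
    ext x
    simp only [Finset.mem_Ico, Finset.mem_biUnion, Finset.mem_Icc]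
    constructor
    · rintro ⟨h1, h2⟩
      obtain ⟨m, hm, ha, hb⟩ := aux_exists_interval ZZ q x (by rw [hZZ0]; omega)
        (by rw [htot]; omega)
      have hm1 : 1 ≤ m := by
        by_contra h0
        push_neg at h0
        have hm0 : m + 1 = 1 := by omega
        rw [hm0, hZZ1] at hb
        omega
      exact ⟨m, ⟨hm1, hm⟩, ha, hb⟩
    · rintro ⟨l, ⟨hl1, hl2⟩, ha, hb⟩
      have h1 := hZZmono l 1 hl1
      rw [hZZ1] at h1
      have h2 := hZZn (l+1) (by omega)
      omega
  rw [hIco1n, Finset.sum_biUnion (fun a _ b _ hab => hIcodisj a b hab)]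
  have hperlevel : ∀ l ∈ Finset.Icc 1 q,
      ∑ c ∈ Finset.Ico (ZZ l) (ZZ (l+1)), ((sub c : ℝ)/(n:ℝ))^2
        ≤ (P l : ℝ)⁻¹ + ((D q : ℝ) + 2)/(n:ℝ) := by
    intro l hl
    rw [Finset.mem_Icc] at hl
    have hPl : (0:ℝ) < (P l : ℝ) := by exact_mod_cast hPpos l hl.2
    set B : ℝ := (n:ℝ)/(P l:ℝ) + ((D q : ℝ) + 2) with hB
    have hB0 : (0:ℝ) ≤ B := by positivity
    have hterm : ∀ c ∈ Finset.Ico (ZZ l) (ZZ (l+1)),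
        ((sub c : ℝ)/(n:ℝ))^2 ≤ (B/(n:ℝ)) * ((sub c : ℝ)/(n:ℝ)) := by
      intro c hc
      rw [Finset.mem_Ico] at hc
      have ht := hsubR l hl.1 hl.2 c hc.1 hc.2
      have h1 : (sub c : ℝ)/(n:ℝ) ≤ B/(n:ℝ) := by gcongr
      have h2 : (0:ℝ) ≤ (sub c : ℝ)/(n:ℝ) := by positivity
      calc ((sub c : ℝ)/(n:ℝ))^2 = ((sub c:ℝ)/(n:ℝ)) * ((sub c:ℝ)/(n:ℝ)) := sq _
        _ ≤ (B/(n:ℝ)) * ((sub c:ℝ)/(n:ℝ)) := mul_le_mul_of_nonneg_right h1 h2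
    have hsum1 : ∑ c ∈ Finset.Ico (ZZ l) (ZZ (l+1)), ((sub c : ℝ)/(n:ℝ)) ≤ 1 := by
      rw [← Finset.sum_div, div_le_one hn']
      have hcast : ∑ c ∈ Finset.Ico (ZZ l) (ZZ (l+1)), (sub c : ℝ)
          = ((∑ c ∈ Finset.Ico (ZZ l) (ZZ (l+1)), sub c : ℕ) : ℝ) := by
        push_cast; rfl
      rw [hcast]
      exact_mod_cast hsumsub l hl.1 hl.2
    calc ∑ c ∈ Finset.Ico (ZZ l) (ZZ (l+1)), ((sub c : ℝ)/(n:ℝ))^2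
        ≤ ∑ c ∈ Finset.Ico (ZZ l) (ZZ (l+1)), (B/(n:ℝ)) * ((sub c : ℝ)/(n:ℝ)) :=
          Finset.sum_le_sum hterm
      _ = (B/(n:ℝ)) * ∑ c ∈ Finset.Ico (ZZ l) (ZZ (l+1)), ((sub c : ℝ)/(n:ℝ)) := by
          rw [Finset.mul_sum]
      _ ≤ (B/(n:ℝ)) * 1 := mul_le_mul_of_nonneg_left hsum1 (by positivity)
      _ = (P l : ℝ)⁻¹ + ((D q : ℝ) + 2)/(n:ℝ) := by
          rw [mul_one, hB]
          field_simp
  calc ∑ l ∈ Finset.Icc 1 q, ∑ c ∈ Finset.Ico (ZZ l) (ZZ (l+1)), ((sub c:ℝ)/(n:ℝ))^2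
      ≤ ∑ l ∈ Finset.Icc 1 q, ((P l : ℝ)⁻¹ + ((D q : ℝ) + 2)/(n:ℝ)) :=
        Finset.sum_le_sum hperlevel
    _ = ∑ l ∈ Finset.Icc 1 q, (P l : ℝ)⁻¹ + (q:ℝ) * (((D q : ℝ) + 2)/(n:ℝ)) := by
        rw [Finset.sum_add_distrib, Finset.sum_const, Nat.card_Icc]
        norm_num [nsmul_eq_mul]
    _ ≤ ∑ l ∈ Finset.Icc 1 q, (∏ i ∈ Finset.Icc 1 l, (D i : ℝ))⁻¹
        + ((D q : ℝ) + 2) * ((D q : ℝ) + 2 + 2*(q:ℝ))/(n:ℝ) := by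
        have he : ∀ l ∈ Finset.Icc 1 q,
            (P l : ℝ)⁻¹ = (∏ i ∈ Finset.Icc 1 l, (D i : ℝ))⁻¹ := by
          intro l _
          rw [hP]
          push_cast
          rfl
        rw [Finset.sum_congr rfl he]
        have hq0 : (0:ℝ) ≤ (q:ℝ) := Nat.cast_nonneg q
        have hD0 : (0:ℝ) ≤ (D q : ℝ) := Nat.cast_nonneg _
        have hkey : (q:ℝ) * (((D q:ℝ)+2)/(n:ℝ))
            ≤ ((D q:ℝ)+2) * ((D q:ℝ)+2+2*(q:ℝ))/(n:ℝ) := by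
          have hnum : (q:ℝ) * ((D q:ℝ)+2) ≤ ((D q:ℝ)+2) * ((D q:ℝ)+2+2*(q:ℝ)) := by
            nlinarith
          calc (q:ℝ) * (((D q:ℝ)+2)/(n:ℝ)) = ((q:ℝ) * ((D q:ℝ)+2))/(n:ℝ) := by ring
            _ ≤ (((D q:ℝ)+2) * ((D q:ℝ)+2+2*(q:ℝ)))/(n:ℝ) := by gcongr
            _ = ((D q:ℝ)+2) * ((D q:ℝ)+2+2*(q:ℝ))/(n:ℝ) := by ring
        linarith
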